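/- Let r > 0, let a be a finite signed measure on [-r, 0], and let θ ∈ ℝ. Suppose x : [0, ∞) → ℝ is continuous, satisfies x(t) = 1 + θ ∫_0^t ∫_{[-r,0]} x̃(s+u) a(du) ds for all t ≥ 0 (where x̃ extends x by 0 on (-∞, 0)), and satisfies |x(t)| ≤ C e^{ct} for all t ≥ 0, for some constants C > 0 and c ∈ ℝ. Then for every λ ∈ ℂ with Re(λ) > c, one has h_θ(λ) ≠ 0 and ∫_0^∞ e^{-λt} x(t) dt = 1 / h_θ(λ), where h_θ(λ) = λ - θ ∫_{[-r,0]} e^{λu} a(du). -/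

import Mathlib

open MeasureTheory Set Filter intervalIntegral
open scoped Topology

lemma intCexp (l : ℂ) (s T : ℝ) :
    ∫ t in s..T, l * Complex.exp (-(l * t)) =
      Complex.exp (-(l * s)) - Complex.exp (-(l * T)) := by
  have hd : ∀ t : ℝ, HasDerivAt (fun t : ℝ => -Complex.exp (-(l * t)))
      (l * Complex.exp (-(l * t))) t := by
    intro t
    have h1 : HasDerivAt (fun t : ℝ => (t : ℂ)) 1 t := (hasDerivAt_id t).ofReal_comp
    have h2 := (((h1.const_mul l).neg).cexp).neg
    have h3 := h2.congr_deriv (g' := l * Complex.exp (-(l * t))) (by simp only [Pi.neg_apply]; ring)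
    have h4 : (fun t : ℝ => -Complex.exp (-(l * t)))
        = -fun x : ℝ => Complex.exp ((-fun y : ℝ => l * (y:ℂ)) x) := by
      funext t; simp
    rw [h4]; exact h3
  rw [intervalIntegral.integral_eq_sub_of_hasDerivAt (fun t _ => hd t)
    ((continuous_const.mul (Complex.continuous_exp.comp
      ((continuous_const.mul Complex.continuous_ofReal).neg))).intervalIntegrable s T)]
  ring

lemma normCexp (l : ℂ) (t : ℝ) : ‖Complex.exp (-(l * t))‖ = Real.exp (-(l.re * t)) := by
  rw [Complex.norm_exp]
  congr 1
  simp [Complex.mul_re]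

/-- Integral of a real-valued function on a set against a finite signed measure,
defined via the Jordan decomposition. -/
noncomputable def sInt (a : SignedMeasure ℝ) (s : Set ℝ) (f : ℝ → ℝ) : ℝ :=
  (∫ x in s, f x ∂a.toJordanDecomposition.posPart) -
  (∫ x in s, f x ∂a.toJordanDecomposition.negPart)

/-- Integral of a complex-valued function on a set against a finite signed measure,
defined via the Jordan decomposition. -/
noncomputable def cInt (a : SignedMeasure ℝ) (s : Set ℝ) (f : ℝ → ℂ) : ℂ :=
  (∫ x in s, f x ∂a.toJordanDecomposition.posPart) -
  (∫ x in s, f x ∂a.toJordanDecomposition.negPart)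

/-- The characteristic function `h_θ(z) = z - θ ∫_{[-r,0]} e^{zu} a(du)`. -/
noncomputable def hChar (r θ : ℝ) (a : SignedMeasure ℝ) (z : ℂ) : ℂ :=
  z - (θ : ℂ) * cInt a (Icc (-r) 0) (fun u => Complex.exp (z * (u : ℂ)))

/-- If the fundamental solution satisfies `|x(t)| ≤ C e^{ct}`, then for every `λ` with
`Re λ > c` the characteristic function does not vanish and the Laplace transform of `x`
equals `1 / h_θ(λ)`. -/
theorem laplace_transform_of_fundamental_solution (r : ℝ) (hr : 0 < r)
    (a : SignedMeasure ℝ) (ha : a.totalVariation (Icc (-r) 0)ᶜ = 0) (θ : ℝ)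
    (x : ℝ → ℝ) (hxc : ContinuousOn x (Ici 0)) (hx0 : ∀ t : ℝ, t < 0 → x t = 0)
    (hxeq : ∀ t : ℝ, 0 ≤ t →
      x t = 1 + θ * ∫ s in (0:ℝ)..t, sInt a (Icc (-r) 0) (fun u => x (s + u)))
    (C c : ℝ) (hC : 0 < C)
    (hbd : ∀ t : ℝ, 0 ≤ t → |x t| ≤ C * Real.exp (c * t)) :
    ∀ l : ℂ, c < l.re →
      hChar r θ a l ≠ 0 ∧
      (∫ t in Ioi (0:ℝ), Complex.exp (-(l * (t : ℂ))) * (x t : ℂ)) = 1 / hChar r θ a l := by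
  intro l hl
  classical
  set P : Measure ℝ := a.toJordanDecomposition.posPart.restrict (Icc (-r) 0) with hPdef
  set Q : Measure ℝ := a.toJordanDecomposition.negPart.restrict (Icc (-r) 0) with hQdef
  haveI hPfin : IsFiniteMeasure P :=
    ⟨by rw [hPdef, Measure.restrict_apply_univ]; exact measure_lt_top _ _⟩
  haveI hQfin : IsFiniteMeasure Q :=
    ⟨by rw [hQdef, Measure.restrict_apply_univ]; exact measure_lt_top _ _⟩
  have hPae : ∀ᵐ u ∂P, u ∈ Icc (-r) (0:ℝ) := by
    rw [hPdef]; exact ae_restrict_mem measurableSet_Icc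
  have hQae : ∀ᵐ u ∂Q, u ∈ Icc (-r) (0:ℝ) := by
    rw [hQdef]; exact ae_restrict_mem measurableSet_Icc
  -- measurability of x
  have hmx : Measurable x := by
    have h1 : Continuous fun t : ℝ => x (max t 0) :=
      hxc.comp_continuous (continuous_id.max continuous_const) fun t => mem_Ici.mpr (le_max_right _ _)
    have h2 : x = (Ici (0:ℝ)).indicator fun t => x (max t 0) := by
      funext t
      by_cases ht : (0:ℝ) ≤ t
      · rw [indicator_of_mem (mem_Ici.mpr ht), max_eq_left ht]
      · rw [indicator_of_notMem (by simpa using ht), hx0 t (lt_of_not_ge ht)]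
    rw [h2]; exact h1.measurable.indicator measurableSet_Ici
  -- global bound
  have hxbd : ∀ t : ℝ, |x t| ≤ C * Real.exp (c * t) := by
    intro t
    rcases le_or_gt 0 t with ht | ht
    · exact hbd t ht
    · rw [hx0 t ht, abs_zero]; positivity
  set D := C * Real.exp (|c| * r) with hDdef
  have hD0 : 0 < D := by positivity
  have hshift : ∀ s : ℝ, ∀ u ∈ Icc (-r) (0:ℝ), |x (s + u)| ≤ D * Real.exp (c * s) := by
    intro s u hu
    refine (hxbd _).trans ?_
    have h1 : c * u ≤ |c| * r := by
      calc c * u ≤ |c * u| := le_abs_self _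
        _ = |c| * |u| := abs_mul _ _
        _ ≤ |c| * r := by
            apply mul_le_mul_of_nonneg_left _ (abs_nonneg c)
            exact abs_le.mpr ⟨hu.1, hu.2.trans hr.le⟩
    calc C * Real.exp (c * (s + u)) ≤ C * Real.exp (|c| * r + c * s) := by
          apply mul_le_mul_of_nonneg_left _ hC.le
          apply Real.exp_le_exp.mpr; nlinarith
      _ = D * Real.exp (c * s) := by rw [hDdef, mul_assoc, ← Real.exp_add]
  -- the integrand
  set f : ℝ → ℂ := fun t => Complex.exp (-(l * t)) * (x t : ℂ) with hfdef
  have hmf : Measurable f := by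
    apply Measurable.mul
    · exact Complex.measurable_exp.comp ((measurable_const.mul Complex.measurable_ofReal).neg)
    · exact Complex.measurable_ofReal.comp hmx
  have hnormf : ∀ t : ℝ, ‖f t‖ = Real.exp (-(l.re * t)) * |x t| := by
    intro t
    rw [hfdef]
    simp only [norm_mul, Complex.norm_real, Real.norm_eq_abs, Complex.norm_exp]
    congr 2
    simp [Complex.mul_re]
  have hmaj : ∀ A : ℝ, IntegrableOn (fun t : ℝ => A * Real.exp ((c - l.re) * t)) (Ioi 0) := by
    intro A
    have h0 : (0:ℝ) < l.re - c := by linarith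
    have := (exp_neg_integrableOn_Ioi 0 h0).const_mul A
    exact (by simpa [neg_sub] using this :
      Integrable (fun t : ℝ => A * Real.exp ((c - l.re) * t)) (volume.restrict (Ioi 0)))
  have hboundf : ∀ A : ℝ, ∀ t : ℝ, |x t| ≤ A * Real.exp (c * t) →
      ‖f t‖ ≤ A * Real.exp ((c - l.re) * t) := by
    intro A t hA
    rw [hnormf]
    calc Real.exp (-(l.re * t)) * |x t| ≤ Real.exp (-(l.re * t)) * (A * Real.exp (c * t)) := by
          apply mul_le_mul_of_nonneg_left hA (Real.exp_nonneg _)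
      _ = A * Real.exp (-(l.re * t) + c * t) := by rw [Real.exp_add]; ring
      _ = A * Real.exp ((c - l.re) * t) := by ring_nf
  have hfi : IntegrableOn f (Ioi (0:ℝ)) := by
    refine Integrable.mono' (hmaj C) hmf.aestronglyMeasurable ?_
    exact ae_of_all _ fun t => hboundf C t (hxbd t)
  set X : ℂ := ∫ t in Ioi (0:ℝ), f t with hXdef
  -- the convolution-type function g
  set g : ℝ → ℝ := fun s => (∫ u, x (s + u) ∂P) - ∫ u, x (s + u) ∂Q with hgdef
  have hgsInt : ∀ s : ℝ, sInt a (Icc (-r) 0) (fun u => x (s + u)) = g s := fun s => rfl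
  have hmshift : Measurable fun z : ℝ × ℝ => x (z.1 + z.2) :=
    hmx.comp (measurable_fst.add measurable_snd)
  have hmg : Measurable g := by
    have h1 : StronglyMeasurable fun s : ℝ => ∫ u, x (s + u) ∂P :=
      hmshift.stronglyMeasurable.integral_prod_right'
    have h2 : StronglyMeasurable fun s : ℝ => ∫ u, x (s + u) ∂Q :=
      hmshift.stronglyMeasurable.integral_prod_right'
    exact (h1.sub h2).measurable
  -- bound on partial integrals
  have hIm : ∀ (m : Measure ℝ), IsFiniteMeasure m → (∀ᵐ u ∂m, u ∈ Icc (-r) (0:ℝ)) → ∀ s : ℝ,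
      ‖∫ u, x (s + u) ∂m‖ ≤ D * Real.exp (c * s) * (m univ).toReal := by
    intro m hmfin hmae s
    haveI := hmfin
    apply MeasureTheory.norm_integral_le_of_norm_le_const
    filter_upwards [hmae] with u hu
    rw [Real.norm_eq_abs]
    exact hshift s u hu
  set K := D * ((P univ).toReal + (Q univ).toReal) with hKdef
  have hK0 : 0 ≤ K := by positivity
  have hgbd : ∀ s : ℝ, |g s| ≤ K * Real.exp (c * s) := by
    intro s
    rw [hgdef]
    calc |(∫ u, x (s + u) ∂P) - ∫ u, x (s + u) ∂Q|
        ≤ ‖∫ u, x (s + u) ∂P‖ + ‖∫ u, x (s + u) ∂Q‖ := by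
          rw [← Real.norm_eq_abs]; exact norm_sub_le _ _
      _ ≤ D * Real.exp (c * s) * (P univ).toReal + D * Real.exp (c * s) * (Q univ).toReal :=
          add_le_add (hIm P hPfin hPae s) (hIm Q hQfin hQae s)
      _ = K * Real.exp (c * s) := by rw [hKdef]; ring
  set gC : ℝ → ℂ := fun s => (g s : ℂ) with hgCdef
  have hmgC : Measurable gC := Complex.measurable_ofReal.comp hmg
  have hglaw : ∀ t : ℝ, 0 ≤ t → (x t : ℂ) = 1 + θ * ∫ s in Ioc (0:ℝ) t, gC s := by
    intro t ht
    have hx := hxeq t ht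
    rw [intervalIntegral.integral_of_le ht] at hx
    have h2 : (∫ s in Ioc (0:ℝ) t, gC s) = ((∫ s in Ioc (0:ℝ) t, g s : ℝ) : ℂ) := by
      rw [hgCdef]; exact integral_ofReal
    rw [h2]
    have h3 : (∫ s in Ioc (0:ℝ) t, g s) =
        ∫ s in Ioc (0:ℝ) t, sInt a (Icc (-r) 0) (fun u => x (s + u)) := by
      apply setIntegral_congr_fun measurableSet_Ioc
      intro s _
      exact (hgsInt s).symm
    rw [h3, hx]
    push_cast
    ring
  have hegCi : IntegrableOn (fun s : ℝ => Complex.exp (-(l * s)) * gC s) (Ioi (0:ℝ)) := by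
    refine Integrable.mono' (hmaj K) ?_ ?_
    · exact ((Complex.measurable_exp.comp
        ((measurable_const.mul Complex.measurable_ofReal).neg)).mul hmgC).aestronglyMeasurable
    · refine ae_of_all _ fun s => ?_
      rw [norm_mul, normCexp, hgCdef]
      simp only [Complex.norm_real, Real.norm_eq_abs]
      calc Real.exp (-(l.re * s)) * |g s| ≤ Real.exp (-(l.re * s)) * (K * Real.exp (c * s)) :=
            mul_le_mul_of_nonneg_left (hgbd s) (Real.exp_nonneg _)
        _ = K * Real.exp (-(l.re * s) + c * s) := by rw [Real.exp_add]; ring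
        _ = K * Real.exp ((c - l.re) * s) := by ring_nf
  set L : ℂ := ∫ s in Ioi (0:ℝ), Complex.exp (-(l * (s:ℝ))) * gC s with hLdef
  have hIT : ∀ T : ℝ, 0 ≤ T →
      (∫ t in Ioc (0:ℝ) T, l * f t) =
        1 - Complex.exp (-(l * T)) * (x T : ℂ) +
          θ * ∫ s in Ioc (0:ℝ) T, Complex.exp (-(l * (s:ℝ))) * gC s := by
    intro T hT
    have hfiT : IntegrableOn (fun t => l * f t) (Ioc (0:ℝ) T) :=
      (hfi.mono_set Ioc_subset_Ioi_self).const_mul l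
    have hcont_e : Continuous fun t : ℝ => l * Complex.exp (-(l * t)) :=
      continuous_const.mul (Complex.continuous_exp.comp
        ((continuous_const.mul Complex.continuous_ofReal).neg))
    have heT : IntegrableOn (fun t : ℝ => l * Complex.exp (-(l * t))) (Ioc (0:ℝ) T) :=
      hcont_e.integrableOn_Ioc
    have hdiff : (∫ t in Ioc (0:ℝ) T, (l * f t - l * Complex.exp (-(l * t))))
        = (∫ t in Ioc (0:ℝ) T, l * f t) - ∫ t in Ioc (0:ℝ) T, l * Complex.exp (-(l * t)) :=
      integral_sub hfiT heT
    have hfirst : (∫ t in Ioc (0:ℝ) T, l * Complex.exp (-(l * (t:ℝ))))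
        = 1 - Complex.exp (-(l * T)) := by
      rw [← intervalIntegral.integral_of_le hT, intCexp]
      simp
    have hcong : ∀ t ∈ Ioc (0:ℝ) T, l * f t - l * Complex.exp (-(l * t))
        = θ * (l * Complex.exp (-(l * t)) * ∫ s in Ioc (0:ℝ) t, gC s) := by
      intro t ht
      have h1 := hglaw t ht.1.le
      rw [hfdef]
      simp only
      rw [h1]
      ring
    have hdiff2 : (∫ t in Ioc (0:ℝ) T, (l * f t - l * Complex.exp (-(l * t))))
        = θ * ∫ t in Ioc (0:ℝ) T, l * Complex.exp (-(l * (t:ℝ))) * ∫ s in Ioc (0:ℝ) t, gC s := by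
      rw [setIntegral_congr_fun measurableSet_Ioc hcong, MeasureTheory.integral_const_mul]
    -- Fubini swap on the triangle
    have hswap : (∫ t in Ioc (0:ℝ) T, l * Complex.exp (-(l * (t:ℝ))) * ∫ s in Ioc (0:ℝ) t, gC s)
        = ∫ s in Ioc (0:ℝ) T, gC s * (Complex.exp (-(l * (s:ℝ))) - Complex.exp (-(l * T))) := by
      set F : ℝ → ℝ → ℂ := fun t s =>
        (Ioc (0:ℝ) t).indicator (fun s' => l * Complex.exp (-(l * t)) * gC s') s with hFdef
      have hFunc : Function.uncurry F = fun z : ℝ × ℝ =>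
          ({w : ℝ × ℝ | 0 < w.2 ∧ w.2 ≤ w.1}).indicator
            (fun w => l * Complex.exp (-(l * w.1)) * gC w.2) z := by
        funext z
        rcases z with ⟨t, s⟩
        simp only [Function.uncurry, hFdef, indicator, mem_Ioc, mem_setOf_eq]
      have hFm : Measurable (Function.uncurry F) := by
        rw [hFunc]
        apply Measurable.indicator
        · exact ((measurable_const.mul (Complex.measurable_exp.comp
            ((measurable_const.mul (Complex.measurable_ofReal.comp measurable_fst)).neg)))).mul
            (hmgC.comp measurable_snd)
        · have hseteq : {w : ℝ × ℝ | 0 < w.2 ∧ w.2 ≤ w.1}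
              = {w : ℝ × ℝ | (0:ℝ) < w.2} ∩ {w : ℝ × ℝ | w.2 ≤ w.1} := rfl
          rw [hseteq]
          exact (measurableSet_lt measurable_const measurable_snd).inter
            (measurableSet_le measurable_snd measurable_fst)
      have hprodae : ∀ᵐ z : ℝ × ℝ ∂((volume.restrict (Ioc (0:ℝ) T)).prod
          (volume.restrict (Ioc (0:ℝ) T))), z ∈ Ioc (0:ℝ) T ×ˢ Ioc (0:ℝ) T := by
        rw [Measure.prod_restrict]
        exact ae_restrict_mem (measurableSet_Ioc.prod measurableSet_Ioc)
      have hFint : Integrable (Function.uncurry F)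
          ((volume.restrict (Ioc (0:ℝ) T)).prod (volume.restrict (Ioc (0:ℝ) T))) := by
        refine Integrable.mono'
          (integrable_const (‖l‖ * Real.exp (|l.re| * T) * (K * Real.exp (|c| * T))))
          hFm.aestronglyMeasurable ?_
        filter_upwards [hprodae] with z hz
        rw [hFunc]
        refine (norm_indicator_le_norm_self _ _).trans ?_
        rw [norm_mul, norm_mul, normCexp]
        have h1 : Real.exp (-(l.re * z.1)) ≤ Real.exp (|l.re| * T) := by
          apply Real.exp_le_exp.mpr
          calc -(l.re * z.1) ≤ |l.re * z.1| := neg_le_abs _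
            _ = |l.re| * |z.1| := abs_mul _ _
            _ ≤ |l.re| * T := by
                apply mul_le_mul_of_nonneg_left _ (abs_nonneg _)
                rw [abs_of_pos hz.1.1]
                exact hz.1.2
        have h2 : ‖gC z.2‖ ≤ K * Real.exp (|c| * T) := by
          rw [hgCdef]
          simp only [Complex.norm_real, Real.norm_eq_abs]
          refine (hgbd z.2).trans ?_
          apply mul_le_mul_of_nonneg_left _ hK0
          apply Real.exp_le_exp.mpr
          calc c * z.2 ≤ |c * z.2| := le_abs_self _
            _ = |c| * |z.2| := abs_mul _ _
            _ ≤ |c| * T := by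
                apply mul_le_mul_of_nonneg_left _ (abs_nonneg _)
                rw [abs_of_pos hz.2.1]
                exact hz.2.2
        exact mul_le_mul (mul_le_mul_of_nonneg_left h1 (norm_nonneg _)) h2 (norm_nonneg _)
          (by positivity)
      have hleft : ∀ t ∈ Ioc (0:ℝ) T,
          (∫ s in Ioc (0:ℝ) T, F t s)
            = l * Complex.exp (-(l * (t:ℝ))) * ∫ s in Ioc (0:ℝ) t, gC s := by
        intro t ht
        calc (∫ s in Ioc (0:ℝ) T, F t s)
            = ∫ s in Ioc (0:ℝ) T ∩ Ioc (0:ℝ) t, l * Complex.exp (-(l * (t:ℝ))) * gC s := by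
              rw [hFdef]
              exact setIntegral_indicator measurableSet_Ioc
          _ = ∫ s in Ioc (0:ℝ) t, l * Complex.exp (-(l * (t:ℝ))) * gC s := by
              rw [Set.Ioc_inter_Ioc, sup_idem, inf_eq_right.mpr ht.2]
          _ = l * Complex.exp (-(l * (t:ℝ))) * ∫ s in Ioc (0:ℝ) t, gC s := MeasureTheory.integral_const_mul _ _
      have hright : ∀ s ∈ Ioc (0:ℝ) T,
          (∫ t in Ioc (0:ℝ) T, F t s)
            = gC s * (Complex.exp (-(l * (s:ℝ))) - Complex.exp (-(l * T))) := by
        intro s hs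
        have hne : ∀ᵐ t ∂(volume.restrict (Ioc (0:ℝ) T)), t ≠ s := by
          refine ae_restrict_of_ae ?_
          rw [ae_iff]
          have hset : {t : ℝ | ¬t ≠ s} = {s} := by
            ext t
            simp [not_not]
          rw [hset]
          exact Real.volume_singleton
        have h1 : ∀ t : ℝ, t ≠ s →
            F t s = (Ioi s).indicator (fun t' => l * Complex.exp (-(l * t')) * gC s) t := by
          intro t hts
          rw [hFdef]
          simp only [indicator, mem_Ioc, mem_Ioi]
          by_cases h : s < t
          · rw [if_pos ⟨hs.1, h.le⟩, if_pos h]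
          · have hnot : ¬(0 < s ∧ s ≤ t) := by
              rintro ⟨-, hle⟩
              exact h (lt_of_le_of_ne hle (Ne.symm hts))
            rw [if_neg hnot, if_neg h]
        calc (∫ t in Ioc (0:ℝ) T, F t s)
            = ∫ t in Ioc (0:ℝ) T, (Ioi s).indicator
                (fun t' => l * Complex.exp (-(l * t')) * gC s) t := by
              apply MeasureTheory.integral_congr_ae
              filter_upwards [hne] with t ht
              exact h1 t ht
          _ = ∫ t in Ioc (0:ℝ) T ∩ Ioi s, l * Complex.exp (-(l * (t:ℝ))) * gC s :=
              setIntegral_indicator measurableSet_Ioi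
          _ = ∫ t in Ioc s T, l * Complex.exp (-(l * (t:ℝ))) * gC s := by
              rw [Set.Ioc_inter_Ioi, sup_eq_right.mpr hs.1.le]
          _ = (∫ t in Ioc s T, l * Complex.exp (-(l * (t:ℝ)))) * gC s := MeasureTheory.integral_mul_const _ _
          _ = (Complex.exp (-(l * (s:ℝ))) - Complex.exp (-(l * T))) * gC s := by
              rw [← intervalIntegral.integral_of_le hs.2, intCexp]
          _ = gC s * (Complex.exp (-(l * (s:ℝ))) - Complex.exp (-(l * T))) := mul_comm _ _
      calc (∫ t in Ioc (0:ℝ) T, l * Complex.exp (-(l * (t:ℝ))) * ∫ s in Ioc (0:ℝ) t, gC s)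
          = ∫ t in Ioc (0:ℝ) T, (∫ s in Ioc (0:ℝ) T, F t s) := by
            apply setIntegral_congr_ae measurableSet_Ioc
            filter_upwards with t ht
            exact (hleft t ht).symm
        _ = ∫ s in Ioc (0:ℝ) T, (∫ t in Ioc (0:ℝ) T, F t s) := integral_integral_swap hFint
        _ = ∫ s in Ioc (0:ℝ) T, gC s * (Complex.exp (-(l * (s:ℝ))) - Complex.exp (-(l * T))) := by
            apply setIntegral_congr_ae measurableSet_Ioc
            filter_upwards with s hs
            exact hright s hs
    have hgCIoc : IntegrableOn gC (Ioc (0:ℝ) T) := by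
      refine Integrable.mono' (integrable_const (K * Real.exp (|c| * T)))
        hmgC.aestronglyMeasurable ?_
      filter_upwards [ae_restrict_mem measurableSet_Ioc] with s hs
      rw [hgCdef]
      simp only [Complex.norm_real, Real.norm_eq_abs]
      refine (hgbd s).trans ?_
      apply mul_le_mul_of_nonneg_left _ hK0
      apply Real.exp_le_exp.mpr
      calc c * s ≤ |c * s| := le_abs_self _
        _ = |c| * |s| := abs_mul _ _
        _ ≤ |c| * T := by
            apply mul_le_mul_of_nonneg_left _ (abs_nonneg _)
            rw [abs_of_pos hs.1]
            exact hs.2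
    have h1 : IntegrableOn (fun s : ℝ => gC s * Complex.exp (-(l * (s:ℝ)))) (Ioc (0:ℝ) T) :=
      (hegCi.mono_set Ioc_subset_Ioi_self).congr (ae_of_all _ fun s => mul_comm _ _)
    have h2 : IntegrableOn (fun s : ℝ => gC s * Complex.exp (-(l * T))) (Ioc (0:ℝ) T) :=
      hgCIoc.mul_const _
    have hsplit : (∫ s in Ioc (0:ℝ) T, gC s * (Complex.exp (-(l * (s:ℝ))) - Complex.exp (-(l * T))))
        = (∫ s in Ioc (0:ℝ) T, Complex.exp (-(l * (s:ℝ))) * gC s)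
          - Complex.exp (-(l * T)) * ∫ s in Ioc (0:ℝ) T, gC s := by
      simp only [mul_sub]
      rw [integral_sub h1 h2]
      congr 1
      · exact setIntegral_congr_fun measurableSet_Ioc fun s _ => mul_comm _ _
      · rw [MeasureTheory.integral_mul_const]
        exact mul_comm _ _
    have hgT : (θ:ℂ) * (∫ s in Ioc (0:ℝ) T, gC s) = (x T : ℂ) - 1 := by
      rw [hglaw T hT]
      ring
    have hfinal : (∫ t in Ioc (0:ℝ) T, l * f t)
        = (1 - Complex.exp (-(l * T)))
          + θ * ((∫ s in Ioc (0:ℝ) T, Complex.exp (-(l * (s:ℝ))) * gC s)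
            - Complex.exp (-(l * T)) * ∫ s in Ioc (0:ℝ) T, gC s) := by
      rw [← hfirst, ← hsplit, ← hswap]
      rw [hdiff] at hdiff2
      linear_combination hdiff2
    rw [hfinal]
    linear_combination (-Complex.exp (-(l * (T:ℝ)))) * hgT
  -- limits as T → ∞
  have hlim1 : Tendsto (fun T : ℝ => ∫ t in Ioc (0:ℝ) T, l * f t) atTop (𝓝 (l * X)) := by
    have h1 : IntegrableOn (fun t => l * f t) (Ioi (0:ℝ)) := hfi.const_mul l
    have h2 := MeasureTheory.intervalIntegral_tendsto_integral_Ioi 0 h1 tendsto_id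
    have h3 : (∫ t in Ioi (0:ℝ), l * f t) = l * X := by
      rw [hXdef, MeasureTheory.integral_const_mul]
    rw [h3] at h2
    apply h2.congr'
    filter_upwards [eventually_ge_atTop (0:ℝ)] with T hT
    exact intervalIntegral.integral_of_le hT
  have hlim2 : Tendsto (fun T : ℝ => Complex.exp (-(l * T)) * (x T : ℂ)) atTop (𝓝 0) := by
    have hb : ∀ T : ℝ, ‖Complex.exp (-(l * T)) * ((x T : ℝ) : ℂ)‖
        ≤ C * Real.exp ((c - l.re) * T) := fun T => hboundf C T (hxbd T)
    have hgt : Tendsto (fun T : ℝ => C * Real.exp ((c - l.re) * T)) atTop (𝓝 0) := by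
      have h0 : Tendsto (fun T : ℝ => (l.re - c) * T) atTop atTop :=
        Tendsto.const_mul_atTop (by linarith) tendsto_id
      have h1 := Real.tendsto_exp_neg_atTop_nhds_zero.comp h0
      have h2 := h1.const_mul C
      simp only [mul_zero] at h2
      apply h2.congr
      intro T
      simp only [Function.comp_apply]
      congr 1
      ring
    exact squeeze_zero_norm hb hgt
  have hlim3 : Tendsto (fun T : ℝ => ∫ s in Ioc (0:ℝ) T, Complex.exp (-(l * (s:ℝ))) * gC s)
      atTop (𝓝 L) := by
    have h2 := MeasureTheory.intervalIntegral_tendsto_integral_Ioi 0 hegCi tendsto_id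
    rw [← hLdef] at h2
    apply h2.congr'
    filter_upwards [eventually_ge_atTop (0:ℝ)] with T hT
    exact intervalIntegral.integral_of_le hT
  have hkey1 : l * X = (1:ℂ) + θ * L := by
    have hrhs : Tendsto (fun T : ℝ => 1 - Complex.exp (-(l * T)) * (x T : ℂ)
        + θ * ∫ s in Ioc (0:ℝ) T, Complex.exp (-(l * (s:ℝ))) * gC s) atTop
        (𝓝 (1 - 0 + θ * L)) :=
      (tendsto_const_nhds.sub hlim2).add (hlim3.const_mul (θ:ℂ))
    have hl2 : Tendsto (fun T : ℝ => ∫ t in Ioc (0:ℝ) T, l * f t) atTop (𝓝 (1 - 0 + θ * L)) := by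
      apply hrhs.congr'
      filter_upwards [eventually_ge_atTop (0:ℝ)] with T hT
      exact (hIT T hT).symm
    have huniq := tendsto_nhds_unique hlim1 hl2
    simpa using huniq
  -- Fubini over the measure m
  have hFub : ∀ (m : Measure ℝ), IsFiniteMeasure m → (∀ᵐ u ∂m, u ∈ Icc (-r) (0:ℝ)) →
      (∫ s in Ioi (0:ℝ), Complex.exp (-(l * (s:ℝ))) * ((∫ u, x (s + u) ∂m : ℝ) : ℂ))
        = (∫ u, Complex.exp (l * (u:ℝ)) ∂m) * X := by
    intro m hmfin hmae
    haveI := hmfin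
    set φ : ℝ → ℝ → ℂ := fun s u => Complex.exp (-(l * s)) * (x (s + u) : ℂ) with hφdef
    have hφunc : Function.uncurry φ
        = fun z : ℝ × ℝ => Complex.exp (-(l * z.1)) * (x (z.1 + z.2) : ℂ) := rfl
    have hφm : Measurable (Function.uncurry φ) := by
      rw [hφunc]
      exact (Complex.measurable_exp.comp
        ((measurable_const.mul (Complex.measurable_ofReal.comp measurable_fst)).neg)).mul
        (Complex.measurable_ofReal.comp (hmx.comp (measurable_fst.add measurable_snd)))
    have hφint : Integrable (Function.uncurry φ) ((volume.restrict (Ioi (0:ℝ))).prod m) := by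
      have hbnd : Integrable (fun z : ℝ × ℝ => (D * Real.exp ((c - l.re) * z.1)) * (1:ℝ))
          ((volume.restrict (Ioi (0:ℝ))).prod m) := (hmaj D).mul_prod (integrable_const 1)
      simp only [mul_one] at hbnd
      refine Integrable.mono' hbnd hφm.aestronglyMeasurable ?_
      have hae2 : ∀ᵐ z : ℝ × ℝ ∂((volume.restrict (Ioi (0:ℝ))).prod m),
          z.2 ∈ Icc (-r) (0:ℝ) := by
        rw [ae_iff]
        have hm0 : m {u : ℝ | ¬u ∈ Icc (-r) (0:ℝ)} = 0 := by
          have := hmae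
          rw [ae_iff] at this
          exact this
        have hseteq : {z : ℝ × ℝ | ¬z.2 ∈ Icc (-r) (0:ℝ)}
            = (univ : Set ℝ) ×ˢ {u : ℝ | ¬u ∈ Icc (-r) (0:ℝ)} := by
          ext z
          simp [Set.mem_prod]
        rw [hseteq, Measure.prod_prod, hm0, mul_zero]
      filter_upwards [hae2] with z hz
      have hn : ‖Function.uncurry φ z‖ = Real.exp (-(l.re * z.1)) * |x (z.1 + z.2)| := by
        rw [hφunc]
        simp only
        rw [norm_mul, normCexp]
        simp [Complex.norm_real]
      rw [hn]
      calc Real.exp (-(l.re * z.1)) * |x (z.1 + z.2)|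
          ≤ Real.exp (-(l.re * z.1)) * (D * Real.exp (c * z.1)) :=
            mul_le_mul_of_nonneg_left (hshift z.1 z.2 hz) (Real.exp_nonneg _)
        _ = D * Real.exp (-(l.re * z.1) + c * z.1) := by rw [Real.exp_add]; ring
        _ = D * Real.exp ((c - l.re) * z.1) := by ring_nf
    have hinner : ∀ u ∈ Icc (-r) (0:ℝ),
        (∫ s in Ioi (0:ℝ), φ s u) = Complex.exp (l * (u:ℝ)) * X := by
      intro u hu
      have hstep1 : (fun s : ℝ => φ s u) = fun s : ℝ => Complex.exp (l * (u:ℝ)) * f (s + u) := by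
        funext s
        rw [hφdef, hfdef]
        simp only
        rw [← mul_assoc, ← Complex.exp_add]
        congr 2
        push_cast
        ring
      rw [hstep1, MeasureTheory.integral_const_mul]
      congr 1
      have htrans : (∫ s in Ioi (0:ℝ), f (s + u)) = ∫ w in Ioi u, f w := by
        rw [← MeasureTheory.integral_indicator measurableSet_Ioi,
          ← MeasureTheory.integral_indicator measurableSet_Ioi]
        have hind : (fun s => (Ioi (0:ℝ)).indicator (fun s' => f (s' + u)) s)
            = fun s => (Ioi u).indicator f (s + u) := by
          funext s
          by_cases hs : (0:ℝ) < s
          · rw [indicator_of_mem (mem_Ioi.mpr hs), indicator_of_mem]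
            exact mem_Ioi.mpr (by linarith)
          · rw [indicator_of_notMem (by simpa using hs), indicator_of_notMem]
            simp only [mem_Ioi, not_lt] at hs ⊢
            linarith
        rw [hind]
        exact MeasureTheory.integral_add_right_eq_self ((Ioi u).indicator f) u
      rw [htrans]
      have hne0 : ∀ᵐ w : ℝ ∂volume, w ≠ 0 := by
        rw [ae_iff]
        have hset0 : {w : ℝ | ¬w ≠ 0} = {0} := by
          ext w
          simp [not_not]
        rw [hset0]
        exact Real.volume_singleton
      have hzero : ∀ᵐ w ∂volume.restrict (Ioc u (0:ℝ)), f w = 0 := by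
        filter_upwards [ae_restrict_mem measurableSet_Ioc, ae_restrict_of_ae hne0] with w hw hwne
        rw [hfdef]
        simp only
        rw [hx0 w (lt_of_le_of_ne hw.2 hwne), Complex.ofReal_zero, mul_zero]
      have hIocint : IntegrableOn f (Ioc u (0:ℝ)) :=
        (integrable_congr hzero).mpr (integrable_zero _ _ _)
      have hsplitset : (∫ w in Ioi u, f w)
          = (∫ w in Ioc u (0:ℝ), f w) + ∫ w in Ioi (0:ℝ), f w := by
        rw [← Ioc_union_Ioi_eq_Ioi hu.2]
        exact setIntegral_union (Ioc_disjoint_Ioi le_rfl) measurableSet_Ioi hIocint hfi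
      have hz2 : (∫ w in Ioc u (0:ℝ), f w) = 0 := by
        rw [MeasureTheory.integral_congr_ae hzero]
        simp
      rw [hsplitset, hz2, zero_add, hXdef]
    have hswapm := MeasureTheory.integral_integral_swap hφint
    calc (∫ s in Ioi (0:ℝ), Complex.exp (-(l * (s:ℝ))) * ((∫ u, x (s + u) ∂m : ℝ) : ℂ))
        = ∫ s in Ioi (0:ℝ), ∫ u, φ s u ∂m := by
          apply setIntegral_congr_ae measurableSet_Ioi
          filter_upwards with s _
          rw [hφdef]
          simp only
          have h4 : (∫ a, ((x (s + a) : ℝ) : ℂ) ∂m) = ((∫ a, x (s + a) ∂m : ℝ) : ℂ) :=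
            integral_ofReal
          rw [MeasureTheory.integral_const_mul, h4]
      _ = ∫ u, (∫ s in Ioi (0:ℝ), φ s u) ∂m := hswapm
      _ = ∫ u, Complex.exp (l * (u:ℝ)) * X ∂m := by
          apply MeasureTheory.integral_congr_ae
          filter_upwards [hmae] with u hu
          exact hinner u hu
      _ = (∫ u, Complex.exp (l * (u:ℝ)) ∂m) * X := MeasureTheory.integral_mul_const _ _
  -- integrability of the two halves of L
  have hIntm : ∀ (m : Measure ℝ), IsFiniteMeasure m → (∀ᵐ u ∂m, u ∈ Icc (-r) (0:ℝ)) →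
      IntegrableOn (fun s : ℝ => Complex.exp (-(l * (s:ℝ))) * ((∫ u, x (s + u) ∂m : ℝ) : ℂ))
        (Ioi (0:ℝ)) := by
    intro m hmfin hmae
    haveI := hmfin
    have hsm : StronglyMeasurable fun s : ℝ => ∫ u, x (s + u) ∂m :=
      hmshift.stronglyMeasurable.integral_prod_right'
    refine Integrable.mono' (hmaj (D * (m univ).toReal)) ?_ ?_
    · exact ((Complex.measurable_exp.comp
        ((measurable_const.mul Complex.measurable_ofReal).neg)).mul
        (Complex.measurable_ofReal.comp hsm.measurable)).aestronglyMeasurable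
    · refine ae_of_all _ fun s => ?_
      rw [norm_mul, normCexp]
      have h1 : ‖((∫ u, x (s + u) ∂m : ℝ) : ℂ)‖ ≤ D * Real.exp (c * s) * (m univ).toReal := by
        rw [Complex.norm_real]
        exact hIm m hmfin hmae s
      calc Real.exp (-(l.re * s)) * ‖((∫ u, x (s + u) ∂m : ℝ) : ℂ)‖
          ≤ Real.exp (-(l.re * s)) * (D * Real.exp (c * s) * (m univ).toReal) :=
            mul_le_mul_of_nonneg_left h1 (Real.exp_nonneg _)
        _ = D * (m univ).toReal * Real.exp (-(l.re * s) + c * s) := by rw [Real.exp_add]; ring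
        _ = D * (m univ).toReal * Real.exp ((c - l.re) * s) := by ring_nf
  have hLsplit : L = (∫ u, Complex.exp (l * (u:ℝ)) ∂P) * X
      - (∫ u, Complex.exp (l * (u:ℝ)) ∂Q) * X := by
    rw [hLdef]
    have hgC2 : ∀ s : ℝ, Complex.exp (-(l * (s:ℝ))) * gC s
        = Complex.exp (-(l * (s:ℝ))) * ((∫ u, x (s + u) ∂P : ℝ) : ℂ)
          - Complex.exp (-(l * (s:ℝ))) * ((∫ u, x (s + u) ∂Q : ℝ) : ℂ) := by
      intro s
      rw [hgCdef, hgdef]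
      simp only
      push_cast
      ring
    simp only [hgC2]
    rw [integral_sub (hIntm P hPfin hPae) (hIntm Q hQfin hQae)]
    rw [hFub P hPfin hPae, hFub Q hQfin hQae]
  have hmain : hChar r θ a l * X = 1 := by
    have hhc : hChar r θ a l = l - θ * ((∫ u, Complex.exp (l * (u:ℝ)) ∂P)
        - ∫ u, Complex.exp (l * (u:ℝ)) ∂Q) := rfl
    rw [hhc]
    linear_combination hkey1 + (θ:ℂ) * hLsplit
  have hne : hChar r θ a l ≠ 0 := by
    intro h0
    rw [h0, zero_mul] at hmain
    exact zero_ne_one hmain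
  refine ⟨hne, ?_⟩
  rw [eq_div_iff hne, mul_comm]
  exact hmain
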